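/- Let S be a commutative unital semiring with zero and an element of infinite multiplicative order. The map f_{x,y} : rPS_n → matrices indexed by subsets of [n], defined by [f_{x,y}(s)]_{p,q} = α^i if p·s = q where i is the number of x's added to column y when inserting a word representing s into the single-row tableau p, and 0_S otherwise, is a monoid homomorphism. -/

import Mathlib

/-- An rPS-tableau is represented as the list of its columns, left to right,
each column a list of symbols with the bottom entry first.  Inserting `a`:
if `a` is greater than every bottom entry, a new column `[a]` is appended at
the right; otherwise the leftmost column whose bottom entry is ≥ a is slid up
and `a` is placed at its bottom. -/
def rpsInsert {n : ℕ} [NeZero n] :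
    List (List (Fin n)) → Fin n → List (List (Fin n))
  | [], a => [[a]]
  | c :: rest, a => if a ≤ c.headI then (a :: c) :: rest else c :: rpsInsert rest a

/-- Insert a word, left-to-right, into a tableau. -/
def rpsTableau {n : ℕ} [NeZero n] (T : List (List (Fin n))) (w : List (Fin n)) :
    List (List (Fin n)) :=
  w.foldl rpsInsert T

/-- The single-row tableau corresponding to a subset p ⊆ [n]. -/
def rowTableau {n : ℕ} (p : Finset (Fin n)) : List (List (Fin n)) :=
  (p.sort (· ≤ ·)).map (fun a => [a])

/-- The bottom row of a tableau, as a subset of [n]. -/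
def bottomRow {n : ℕ} [NeZero n] (T : List (List (Fin n))) : Finset (Fin n) :=
  (T.map List.headI).toFinset

/-- The number of occurrences of the symbol x in the y-th column of T. -/
def colCount {n : ℕ} (T : List (List (Fin n))) (x : Fin n) (y : Fin n) : ℕ :=
  (T.getD (y : ℕ) []).count x

/-- The matrix (indexed by subsets of [n]) associated to a word w: the entry
(p, q) is α^i if inserting w into the single-row tableau p produces a tableau
with bottom row q, where i is the number of x's added to column y in the
process, and 0 otherwise. -/
def rpsRep {n : ℕ} [NeZero n] {S : Type*} [CommSemiring S] (α : S)
    (x y : Fin n) (w : List (Fin n)) :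
    Matrix (Finset (Fin n)) (Finset (Fin n)) S :=
  Matrix.of fun p q =>
    if bottomRow (rpsTableau (rowTableau p) w) = q then
      α ^ (colCount (rpsTableau (rowTableau p) w) x y - colCount (rowTableau p) x y)
    else 0

namespace Stmt18Aux
set_option linter.unusedSectionVars false

variable {n : ℕ} [NeZero n]

/-- The list of bottom entries of the columns. -/
def heads (T : List (List (Fin n))) : List (Fin n) := T.map List.headI

lemma heads_nil : heads ([] : List (List (Fin n))) = [] := rfl

lemma heads_cons (c : List (Fin n)) (T : List (List (Fin n))) :
    heads (c :: T) = c.headI :: heads T := rfl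

/-- Insertion on the level of head lists. -/
def insH : List (Fin n) → Fin n → List (Fin n)
  | [], a => [a]
  | h :: rest, a => if a ≤ h then a :: rest else h :: insH rest a

lemma heads_insert (T : List (List (Fin n))) (a : Fin n) :
    heads (rpsInsert T a) = insH (heads T) a := by
  induction T with
  | nil => rfl
  | cons c rest ih =>
    rw [rpsInsert, heads_cons, insH]
    split
    · rfl
    · rw [heads_cons, ih]

lemma rpsTableau_nil (T : List (List (Fin n))) : rpsTableau T [] = T := rfl

lemma rpsTableau_cons (T : List (List (Fin n))) (a : Fin n) (w : List (Fin n)) :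
    rpsTableau T (a :: w) = rpsTableau (rpsInsert T a) w := rfl

lemma rpsTableau_append (T : List (List (Fin n))) (u v : List (Fin n)) :
    rpsTableau T (u ++ v) = rpsTableau (rpsTableau T u) v :=
  List.foldl_append

/-- The head-list evolution. -/
def hsAfter (hs : List (Fin n)) (w : List (Fin n)) : List (Fin n) := w.foldl insH hs

lemma hsAfter_nil (hs : List (Fin n)) : hsAfter hs [] = hs := rfl

lemma hsAfter_cons (hs : List (Fin n)) (a : Fin n) (w : List (Fin n)) :
    hsAfter hs (a :: w) = hsAfter (insH hs a) w := rfl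

lemma heads_rpsTableau (T : List (List (Fin n))) (w : List (Fin n)) :
    heads (rpsTableau T w) = hsAfter (heads T) w := by
  induction w generalizing T with
  | nil => rfl
  | cons a w ih =>
    rw [rpsTableau_cons, hsAfter_cons, ← heads_insert, ih]

/-- Index of the column where `a` is placed. -/
def pos : List (Fin n) → Fin n → ℕ
  | [], _ => 0
  | h :: rest, a => if a ≤ h then 0 else pos rest a + 1

lemma getD_insert (T : List (List (Fin n))) (a : Fin n) (i : ℕ) :
    (rpsInsert T a).getD i [] =
      if i = pos (heads T) a then a :: T.getD i [] else T.getD i [] := by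
  induction T generalizing i with
  | nil =>
    cases i with
    | zero => simp [rpsInsert, pos, heads]
    | succ i => simp [rpsInsert, pos, heads]
  | cons c rest ih =>
    rw [rpsInsert, heads_cons, pos]
    by_cases h : a ≤ c.headI
    · simp only [if_pos h]
      cases i with
      | zero => simp
      | succ i => simp
    · simp only [if_neg h]
      cases i with
      | zero => simp
      | succ i => simpa using ih i

/-- The increment of the count statistic, as a function of the heads. -/
def incr (hs : List (Fin n)) (a x y : Fin n) : ℕ :=
  if (y : ℕ) = pos hs a ∧ a = x then 1 else 0

lemma colCount_insert (T : List (List (Fin n))) (a x y : Fin n) :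
    colCount (rpsInsert T a) x y = colCount T x y + incr (heads T) a x y := by
  unfold colCount incr
  rw [getD_insert]
  by_cases h : (y : ℕ) = pos (heads T) a
  · rw [if_pos h, List.count_cons]
    by_cases hax : a = x
    · simp [h, hax]
    · simp [h, hax]
  · simp [h]

/-- Total count increment along a word, as a function of the initial heads. -/
def wInc (x y : Fin n) : List (Fin n) → List (Fin n) → ℕ
  | _, [] => 0
  | hs, a :: w => incr hs a x y + wInc x y (insH hs a) w

lemma colCount_rpsTableau (T : List (List (Fin n))) (w : List (Fin n)) (x y : Fin n) :
    colCount (rpsTableau T w) x y = colCount T x y + wInc x y (heads T) w := by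
  induction w generalizing T with
  | nil => rfl
  | cons a w ih =>
    rw [rpsTableau_cons, ih, colCount_insert, heads_insert, wInc]
    omega

lemma wInc_append (x y : Fin n) (hs : List (Fin n)) (u v : List (Fin n)) :
    wInc x y hs (u ++ v) = wInc x y hs u + wInc x y (hsAfter hs u) v := by
  induction u generalizing hs with
  | nil => rw [List.nil_append, wInc, hsAfter_nil, Nat.zero_add]
  | cons a u ih =>
    rw [List.cons_append, wInc, wInc, hsAfter_cons, ih, Nat.add_assoc]

lemma mem_insH {hs : List (Fin n)} {a b : Fin n} (h : b ∈ insH hs a) : b = a ∨ b ∈ hs := by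
  induction hs with
  | nil => simpa [insH] using h
  | cons hd t ih =>
    rw [insH] at h
    split at h
    · rcases List.mem_cons.1 h with h | h
      · exact Or.inl h
      · exact Or.inr (List.mem_cons_of_mem _ h)
    · rcases List.mem_cons.1 h with h | h
      · exact Or.inr (h ▸ List.mem_cons_self)
      · rcases ih h with h | h
        · exact Or.inl h
        · exact Or.inr (List.mem_cons_of_mem _ h)

lemma sorted_insH {hs : List (Fin n)} (a : Fin n) (h : List.Pairwise (· < ·) hs) :
    List.Pairwise (· < ·) (insH hs a) := by
  induction hs with
  | nil => simp [insH]
  | cons hd t ih =>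
    rw [List.pairwise_cons] at h
    rw [insH]
    split
    · rename_i hle
      exact List.pairwise_cons.2 ⟨fun b hb => lt_of_le_of_lt hle (h.1 b hb), h.2⟩
    · rename_i hgt
      push_neg at hgt
      refine List.pairwise_cons.2 ⟨fun b hb => ?_, ih h.2⟩
      rcases mem_insH hb with rfl | hb
      · exact hgt
      · exact h.1 b hb

/-- Validity of a tableau: nonempty weakly increasing columns,
strictly increasing bottom entries. -/
structure Valid (T : List (List (Fin n))) : Prop where
  ne : ∀ c ∈ T, c ≠ []
  csorted : ∀ c ∈ T, List.Pairwise (· ≤ ·) c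
  hsorted : List.Pairwise (· < ·) (heads T)

lemma Valid.nil : Valid ([] : List (List (Fin n))) :=
  ⟨by simp, by simp, List.Pairwise.nil⟩

lemma Valid.tail {c : List (Fin n)} {T : List (List (Fin n))} (h : Valid (c :: T)) :
    Valid T :=
  ⟨fun d hd => h.ne d (List.mem_cons_of_mem _ hd),
   fun d hd => h.csorted d (List.mem_cons_of_mem _ hd),
   (List.pairwise_cons.1 h.hsorted).2⟩

lemma headI_le_of_sorted {c : List (Fin n)} (hc : List.Pairwise (· ≤ ·) c) {b : Fin n}
    (hb : b ∈ c) : c.headI ≤ b := by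
  cases c with
  | nil => simp at hb
  | cons hd t =>
    rcases List.mem_cons.1 hb with rfl | hb
    · exact le_refl _
    · exact (List.pairwise_cons.1 hc).1 b hb

lemma mem_rpsInsert {T : List (List (Fin n))} {a : Fin n} {c' : List (Fin n)}
    (h : c' ∈ rpsInsert T a) :
    c' = [a] ∨ c' ∈ T ∨ ∃ c ∈ T, a ≤ c.headI ∧ c' = a :: c := by
  induction T with
  | nil =>
    rw [rpsInsert] at h
    exact Or.inl (by simpa using h)
  | cons c rest ih =>
    rw [rpsInsert] at h
    split at h
    · rcases List.mem_cons.1 h with rfl | h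
      · exact Or.inr (Or.inr ⟨c, List.mem_cons_self, by assumption, rfl⟩)
      · exact Or.inr (Or.inl (List.mem_cons_of_mem _ h))
    · rcases List.mem_cons.1 h with rfl | h
      · exact Or.inr (Or.inl (List.mem_cons_self))
      · rcases ih h with h | h | ⟨d, hd, hle, rfl⟩
        · exact Or.inl h
        · exact Or.inr (Or.inl (List.mem_cons_of_mem _ h))
        · exact Or.inr (Or.inr ⟨d, List.mem_cons_of_mem _ hd, hle, rfl⟩)

lemma Valid.insert {T : List (List (Fin n))} (h : Valid T) (a : Fin n) :
    Valid (rpsInsert T a) := by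
  refine ⟨?_, ?_, ?_⟩
  · intro c' hc'
    rcases mem_rpsInsert hc' with rfl | hc' | ⟨d, _, _, rfl⟩
    · simp
    · exact h.ne c' hc'
    · simp
  · intro c' hc'
    rcases mem_rpsInsert hc' with rfl | hc' | ⟨d, hd, hle, rfl⟩
    · simp
    · exact h.csorted c' hc'
    · refine List.pairwise_cons.2 ⟨fun b hb => ?_, h.csorted d hd⟩
      exact le_trans hle (headI_le_of_sorted (h.csorted d hd) hb)
  · rw [heads_insert]
    exact sorted_insH a h.hsorted

lemma Valid.tableau {T : List (List (Fin n))} (h : Valid T) (w : List (Fin n)) :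
    Valid (rpsTableau T w) := by
  induction w generalizing T with
  | nil => exact h
  | cons a w ih => exact ih (h.insert a)

lemma heads_rowTableau (p : Finset (Fin n)) :
    heads (rowTableau p) = p.sort (· ≤ ·) := by
  unfold heads rowTableau
  rw [List.map_map]
  have : (List.headI ∘ fun a : Fin n => [a]) = id := funext fun a => rfl
  rw [this, List.map_id]

lemma Valid.rowTableau (p : Finset (Fin n)) : Valid (rowTableau p) := by
  refine ⟨?_, ?_, ?_⟩
  · intro c hc
    rcases List.mem_map.1 hc with ⟨a, _, rfl⟩
    simp
  · intro c hc
    rcases List.mem_map.1 hc with ⟨a, _, rfl⟩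
    simp
  · rw [heads_rowTableau]
    exact (Finset.sortedLT_sort p).pairwise

lemma sort_of_sorted {l : List (Fin n)} (h : List.Pairwise (· < ·) l) :
    l.toFinset.sort (· ≤ ·) = l := by
  exact (List.toFinset_sort (· ≤ ·) (h.imp ne_of_lt)).2 (h.imp le_of_lt)

lemma bottomRow_eq (T : List (List (Fin n))) : bottomRow T = (heads T).toFinset := rfl

/-! ### Splitting lemmas -/

lemma rpsInsert_append_left {A : List (List (Fin n))} (B : List (List (Fin n))) {a : Fin n}
    (h : ∃ c ∈ A, a ≤ c.headI) :
    rpsInsert (A ++ B) a = rpsInsert A a ++ B := by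
  induction A with
  | nil => simp at h
  | cons c rest ih =>
    rw [List.cons_append, rpsInsert, rpsInsert]
    by_cases hc : a ≤ c.headI
    · rw [if_pos hc, if_pos hc, List.cons_append]
    · rw [if_neg hc, if_neg hc, List.cons_append, ih]
      rcases h with ⟨d, hd, hle⟩
      rcases List.mem_cons.1 hd with rfl | hd
      · exact absurd hle hc
      · exact ⟨d, hd, hle⟩

lemma rpsInsert_append_right {A : List (List (Fin n))} (B : List (List (Fin n))) {e : Fin n}
    (h : ∀ c ∈ A, c.headI < e) :
    rpsInsert (A ++ B) e = A ++ rpsInsert B e := by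
  induction A with
  | nil => rfl
  | cons c rest ih =>
    rw [List.cons_append, rpsInsert,
      if_neg (not_le.2 (h c (List.mem_cons_self))),
      ih (fun d hd => h d (List.mem_cons_of_mem _ hd)), List.cons_append]

/-! ### The swap lemma -/

lemma swap_lemma (A : List (List (Fin n))) (b : Fin n) (w : List (Fin n))
    (hA : ∀ c ∈ A, ∀ e ∈ w, c.headI < e)
    (hb : ∃ c ∈ A, b ≤ c.headI) :
    ∀ B : List (List (Fin n)),
      rpsTableau (A ++ B) (w ++ [b]) = rpsTableau (A ++ B) (b :: w) := by
  induction w with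
  | nil => intro B; rfl
  | cons e w ih =>
    intro B
    have he : ∀ c ∈ A, c.headI < e := fun c hc => hA c hc e (List.mem_cons_self)
    have hw : ∀ c ∈ A, ∀ e' ∈ w, c.headI < e' :=
      fun c hc e' he' => hA c hc e' (List.mem_cons_of_mem _ he')
    have hbe : b < e := by
      obtain ⟨d, hd, hbd⟩ := hb
      exact lt_of_le_of_lt hbd (he d hd)
    have l1 : rpsTableau (A ++ B) ((e :: w) ++ [b])
        = rpsTableau (A ++ rpsInsert B e) (w ++ [b]) := by
      rw [List.cons_append, rpsTableau_cons, rpsInsert_append_right B he]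
    have r1 : rpsTableau (A ++ B) (b :: e :: w)
        = rpsTableau (rpsInsert A b ++ B) (e :: w) := by
      rw [rpsTableau_cons, rpsInsert_append_left B hb]
    have r2 : rpsTableau (rpsInsert A b ++ B) (e :: w)
        = rpsTableau (rpsInsert A b ++ rpsInsert B e) w := by
      rw [rpsTableau_cons, rpsInsert_append_right]
      intro c hc
      rcases mem_rpsInsert hc with rfl | hc | ⟨d, hd, _, rfl⟩
      · simpa using hbe
      · exact he c hc
      · simpa using hbe
    have l3 : rpsTableau (A ++ rpsInsert B e) (b :: w)
        = rpsTableau (rpsInsert A b ++ rpsInsert B e) w := by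
      rw [rpsTableau_cons, rpsInsert_append_left _ hb]
    rw [l1, ih hw (rpsInsert B e), l3, r1, r2]

lemma exists_decomp {T : List (List (Fin n))} (hs : List.Pairwise (· < ·) (heads T))
    {h : Fin n} (hmem : h ∈ heads T) :
    ∃ A B, T = A ++ B ∧ (∀ c ∈ A, c.headI ≤ h) ∧ ∃ c ∈ A, c.headI = h := by
  induction T with
  | nil => simp [heads] at hmem
  | cons c rest ih =>
    rw [heads_cons] at hmem hs
    rcases List.mem_cons.1 hmem with hh | hmem'
    · exact ⟨[c], rest, rfl, fun d hd => by
        rcases List.mem_singleton.1 hd with rfl; exact le_of_eq hh.symm,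
        c, List.mem_singleton.2 rfl, hh.symm⟩
    · have hlt : c.headI < h := (List.pairwise_cons.1 hs).1 h hmem'
      obtain ⟨A, B, hAB, hle, hex⟩ := ih (List.pairwise_cons.1 hs).2 hmem'
      refine ⟨c :: A, B, by rw [List.cons_append, hAB], fun d hd => ?_, ?_⟩
      · rcases List.mem_cons.1 hd with rfl | hd
        · exact le_of_lt hlt
        · exact hle d hd
      · obtain ⟨d, hd, hdh⟩ := hex
        exact ⟨d, List.mem_cons_of_mem _ hd, hdh⟩

/-! ### Reading word and the core lemma -/

/-- The column reading word of a tableau (columns left to right, each read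
top to bottom). -/
def readW (T : List (List (Fin n))) : List (Fin n) := (T.map List.reverse).flatten

lemma readW_nil : readW ([] : List (List (Fin n))) = [] := rfl

lemma readW_cons (c : List (Fin n)) (T : List (List (Fin n))) :
    readW (c :: T) = c.reverse ++ readW T := rfl

lemma mem_readW {T : List (List (Fin n))} {e : Fin n} (h : e ∈ readW T) :
    ∃ c ∈ T, e ∈ c := by
  unfold readW at h
  rw [List.mem_flatten] at h
  obtain ⟨l, hl, hel⟩ := h
  rcases List.mem_map.1 hl with ⟨c, hc, rfl⟩
  exact ⟨c, hc, List.mem_reverse.1 hel⟩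

lemma mem_heads_insert (T : List (List (Fin n))) (a : Fin n) :
    a ∈ heads (rpsInsert T a) := by
  induction T with
  | nil => simp [rpsInsert, heads]
  | cons c rest ih =>
    rw [rpsInsert]
    split
    · rw [heads_cons]; exact List.mem_cons_self
    · rw [heads_cons]; exact List.mem_cons_of_mem _ ih

lemma core {U : List (List (Fin n))} (hU : Valid U) (b : Fin n) :
    ∀ {T : List (List (Fin n))}, Valid T →
      rpsTableau T (readW U ++ [b]) = rpsTableau T (readW (rpsInsert U b)) := by
  induction U with
  | nil => intro T _; rfl
  | cons c U' ih =>
    intro T hT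
    have hc_ne : c ≠ [] := hU.ne c (List.mem_cons_self)
    have hc_sorted := hU.csorted c (List.mem_cons_self)
    rw [rpsInsert]
    by_cases hb : b ≤ c.headI
    · rw [if_pos hb]
      have hT1 : Valid (rpsTableau T c.reverse) := hT.tableau _
      have hhead : c.headI ∈ heads (rpsTableau T c.reverse) := by
        obtain ⟨hd, t, rfl⟩ := List.exists_cons_of_ne_nil hc_ne
        rw [List.reverse_cons, rpsTableau_append]
        exact mem_heads_insert _ _
      obtain ⟨A, B, hAB, hle, d, hdA, hdh⟩ := exists_decomp hT1.hsorted hhead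
      have hwgt : ∀ c' ∈ A, ∀ e ∈ readW U', c'.headI < e := by
        intro c' hc' e he
        obtain ⟨col, hcol, hecol⟩ := mem_readW he
        have h1 : col.headI ≤ e :=
          headI_le_of_sorted (hU.csorted col (List.mem_cons_of_mem _ hcol)) hecol
        have h2 : c.headI < col.headI := by
          have hs := hU.hsorted
          rw [heads_cons] at hs
          exact (List.pairwise_cons.1 hs).1 col.headI (List.mem_map_of_mem hcol)
        exact lt_of_le_of_lt (hle c' hc') (lt_of_lt_of_le h2 h1)
      have hbex : ∃ c' ∈ A, b ≤ c'.headI := ⟨d, hdA, hdh ▸ hb⟩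
      calc rpsTableau T (readW (c :: U') ++ [b])
          = rpsTableau (rpsTableau T c.reverse) (readW U' ++ [b]) := by
            rw [readW_cons, List.append_assoc, rpsTableau_append]
        _ = rpsTableau (rpsTableau T c.reverse) (b :: readW U') := by
            rw [hAB]; exact swap_lemma A b (readW U') hwgt hbex B
        _ = rpsTableau T (readW ((b :: c) :: U')) := by
            rw [readW_cons, List.reverse_cons, List.append_assoc, rpsTableau_append]
            rfl
    · rw [if_neg hb]
      have hU' : Valid U' := hU.tail
      calc rpsTableau T (readW (c :: U') ++ [b])
          = rpsTableau (rpsTableau T c.reverse) (readW U' ++ [b]) := by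
            rw [readW_cons, List.append_assoc, rpsTableau_append]
        _ = rpsTableau (rpsTableau T c.reverse) (readW (rpsInsert U' b)) :=
            ih hU' (hT.tableau _)
        _ = rpsTableau T (readW (c :: rpsInsert U' b)) := by
            rw [readW_cons, rpsTableau_append]

lemma master (u : List (Fin n)) {T : List (List (Fin n))} (hT : Valid T) :
    rpsTableau T u = rpsTableau T (readW (rpsTableau [] u)) := by
  induction u using List.reverseRecOn with
  | nil => rfl
  | append_singleton u b ihu =>
    have hU : Valid (rpsTableau [] u) := Valid.nil.tableau u
    calc rpsTableau T (u ++ [b])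
        = rpsInsert (rpsTableau T u) b := by rw [rpsTableau_append]; rfl
      _ = rpsInsert (rpsTableau T (readW (rpsTableau [] u))) b := by rw [ihu]
      _ = rpsTableau T (readW (rpsTableau [] u) ++ [b]) := by
          rw [rpsTableau_append]; rfl
      _ = rpsTableau T (readW (rpsInsert (rpsTableau [] u) b)) := core hU b hT
      _ = rpsTableau T (readW (rpsTableau [] (u ++ [b]))) := by
          rw [rpsTableau_append]; rfl

end Stmt18Aux

open Stmt18Aux in
/-- The map f_{x,y} = rpsRep is well defined on the right
patience sorting monoid rPS_n (words with equal rPS-tableaux have equal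
images) and is a monoid homomorphism. -/
theorem stmt_18 {n : ℕ} [NeZero n] (S : Type*) [CommSemiring S] (α : S)
    (hα : ∀ k l : ℕ, α ^ k = α ^ l → k = l) (x y : Fin n) :
    (∀ u v : List (Fin n), rpsTableau [] u = rpsTableau [] v →
      rpsRep (S := S) α x y u = rpsRep α x y v) ∧
    rpsRep (S := S) α x y [] = 1 ∧
    (∀ u v : List (Fin n),
      rpsRep (S := S) α x y (u ++ v) = rpsRep α x y u * rpsRep α x y v) := by
  refine ⟨?_, ?_, ?_⟩
  · intro u v huv
    have key : ∀ p : Finset (Fin n),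
        rpsTableau (rowTableau p) u = rpsTableau (rowTableau p) v := by
      intro p
      rw [master u (Valid.rowTableau p), master v (Valid.rowTableau p), huv]
    ext p q
    simp only [rpsRep, Matrix.of_apply]
    rw [key p]
  · ext p q
    have hbr : bottomRow (rowTableau p) = p := by
      rw [bottomRow_eq, heads_rowTableau, Finset.sort_toFinset]
    simp only [rpsRep, Matrix.of_apply, rpsTableau_nil, hbr, Nat.sub_self, pow_zero,
      Matrix.one_apply]
  · intro u v
    ext p r
    rw [Matrix.mul_apply]
    set T1 := rpsTableau (rowTableau p) u with hT1def
    set q0 := bottomRow T1 with hq0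
    have hT1v : Valid T1 := (Valid.rowTableau p).tableau u
    have hh : heads (rowTableau q0) = heads T1 := by
      rw [heads_rowTableau, hq0, bottomRow_eq]
      exact sort_of_sorted hT1v.hsorted
    have hheadsu : heads T1 = hsAfter (heads (rowTableau p)) u := heads_rpsTableau _ _
    rw [Finset.sum_eq_single q0]
    · simp only [rpsRep, Matrix.of_apply]
      have e1 : colCount T1 x y - colCount (rowTableau p) x y
          = wInc x y (heads (rowTableau p)) u := by
        rw [hT1def, colCount_rpsTableau, Nat.add_sub_cancel_left]
      have e2 : colCount (rpsTableau (rowTableau q0) v) x y - colCount (rowTableau q0) x y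
          = wInc x y (heads T1) v := by
        rw [colCount_rpsTableau, Nat.add_sub_cancel_left, hh]
      have eL : colCount (rpsTableau (rowTableau p) (u ++ v)) x y
            - colCount (rowTableau p) x y
          = wInc x y (heads (rowTableau p)) u + wInc x y (heads T1) v := by
        rw [colCount_rpsTableau, Nat.add_sub_cancel_left, wInc_append, hheadsu]
      have hbr2 : bottomRow (rpsTableau (rowTableau p) (u ++ v))
          = bottomRow (rpsTableau (rowTableau q0) v) := by
        rw [rpsTableau_append, ← hT1def, bottomRow_eq, bottomRow_eq,
          heads_rpsTableau T1 v, heads_rpsTableau (rowTableau q0) v, hh]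
      rw [← hT1def]
      rw [if_pos hq0.symm]
      rw [e1, e2, eL, hbr2]
      by_cases hr : bottomRow (rpsTableau (rowTableau q0) v) = r
      · rw [if_pos hr, if_pos hr, pow_add]
      · rw [if_neg hr, if_neg hr, mul_zero]
    · intro q _ hq
      simp only [rpsRep, Matrix.of_apply]
      rw [← hT1def, if_neg (fun hcontra : bottomRow T1 = q => hq (hq0 ▸ hcontra ▸ rfl)), zero_mul]
    · intro hq0mem
      exact absurd (Finset.mem_univ q0) hq0mem
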